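/- Let (B, Θ) be a category with a discrete structure of nullhomotopies such that Z₁(Θ) is a closed ideal. If Θ-kernels exist in B for all arrows, then they are strong: for any composable W →f N(h) →n_h X →h Y with n_h a Θ-kernel of h, if n_h ∘ f ∈ Z₁(Θ) then f ∈ Z₁(Θ). -/
import Mathlib


open CategoryTheory

/-- For a discrete structure of nullhomotopies whose ideal `Z₁(Θ)` is closed, if Θ-kernels exist
for all arrows then they are strong: for `f : W ⟶ N(h)` with `n_h ∘ f ∈ Z₁`, also `f ∈ Z₁`. -/
theorem stmt10 {B : Type*} [Category B] (Z₁ : ∀ ⦃X Y : B⦄, (X ⟶ Y) → Prop)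
    (ideal : ∀ {W X Y Z : B} (f : W ⟶ X) (g : X ⟶ Y) (h : Y ⟶ Z), Z₁ g → Z₁ (f ≫ g ≫ h))
    (closed : ∀ {X Y : B} (g : X ⟶ Y), Z₁ g →
      ∃ (N : B), Z₁ (𝟙 N) ∧ ∃ (a : X ⟶ N) (b : N ⟶ Y), a ≫ b = g)
    (kernels : ∀ {X Y : B} (h : X ⟶ Y), ∃ (N : B) (n : N ⟶ X), Z₁ (n ≫ h) ∧
      ∀ {W : B} (f : W ⟶ X), Z₁ (f ≫ h) → ∃! f' : W ⟶ N, f' ≫ n = f)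
    {W N X Y : B} (h : X ⟶ Y) (n : N ⟶ X)
    (hmem : Z₁ (n ≫ h))
    (huniv : ∀ {W' : B} (f : W' ⟶ X), Z₁ (f ≫ h) → ∃! f' : W' ⟶ N, f' ≫ n = f)
    (f : W ⟶ N) (hf : Z₁ (f ≫ n)) : Z₁ f := by
  obtain ⟨M, hM, a, b, hab⟩ := closed (f ≫ n) hf
  have hbh : Z₁ (b ≫ h) := by
    have := ideal (𝟙 M) (𝟙 M) (b ≫ h) hM
    simpa using this
  obtain ⟨b', hb', _⟩ := huniv b hbh
  have hfnh : Z₁ ((f ≫ n) ≫ h) := by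
    have := ideal f (n ≫ h) (𝟙 Y) hmem
    simpa using this
  obtain ⟨f', hf', huniq⟩ := huniv (f ≫ n) hfnh
  have h1 : f = f' := huniq f rfl
  have h2 : a ≫ b' = f' := huniq (a ≫ b') (show (a ≫ b') ≫ n = f ≫ n by rw [Category.assoc, hb', hab])
  have : f = a ≫ b' := by rw [h1, h2]
  rw [this]
  have := ideal a (𝟙 M) b' hM
  simpa using this
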